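/- Let F be the 2×2 polynomial matrix with F₁₁ = 2(x₁−1)² + (x₂−1)² + (x₂−2)², F₁₂ = 3 − 2x₂, F₂₂ = 2(x₁−2)² + (x₂−1)² + (x₂−2)². Then the minimum eigenvalue of F(3/2, 1) equals 1/2, and hence inf over K = {x ∈ ℝ² : x₁² ≤ 4, x₂² ≤ 4} of λ_min(F(x)) equals 1/2. -/
import Mathlib


open Matrix

/-- The smallest eigenvalue of a real square matrix: the infimum of the (real) roots of
its characteristic polynomial. -/
noncomputable def lambdaMin {m : ℕ} (M : Matrix (Fin m) (Fin m) ℝ) : ℝ :=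
  sInf {r : ℝ | M.charpoly.IsRoot r}

noncomputable def Fmat (x₁ x₂ : ℝ) : Matrix (Fin 2) (Fin 2) ℝ :=
  !![2*(x₁-1)^2 + (x₂-1)^2 + (x₂-2)^2, 3 - 2*x₂;
     3 - 2*x₂, 2*(x₁-2)^2 + (x₂-1)^2 + (x₂-2)^2]

open Polynomial in
lemma eval_charpoly_fin_two (a b c d r : ℝ) :
    (Matrix.charpoly !![a,b;c,d]).eval r = (r-a)*(r-d) - b*c := by
  rw [Matrix.charpoly, Matrix.det_fin_two]
  simp [charmatrix_apply_eq, charmatrix_apply_ne]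

lemma isRoot_iff (x₁ x₂ r : ℝ) :
    (Fmat x₁ x₂).charpoly.IsRoot r ↔
      (r - (2*(x₁-1)^2 + (x₂-1)^2 + (x₂-2)^2)) * (r - (2*(x₁-2)^2 + (x₂-1)^2 + (x₂-2)^2))
        - (3 - 2*x₂)^2 = 0 := by
  rw [Fmat, Polynomial.IsRoot, eval_charpoly_fin_two]
  constructor <;> intro h <;> nlinarith [h]

lemma root_ge (x₁ x₂ r : ℝ) (h : (Fmat x₁ x₂).charpoly.IsRoot r) : 1/2 ≤ r := by
  rw [isRoot_iff] at h
  by_contra hlt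
  push_neg at hlt
  nlinarith [sq_nonneg (x₂ - 1), sq_nonneg (x₂ - 2), sq_nonneg (x₁ - 1), sq_nonneg (x₁ - 2),
    sq_nonneg ((x₂-1)^2 + (x₂-2)^2 - 1/2 + (x₁-1)^2 + (x₁-2)^2 - 1),
    sq_nonneg (2*x₂ - 3), sq_nonneg (2*x₁ - 3),
    mul_pos (show (0:ℝ) < 2*(x₁-1)^2 + (x₂-1)^2 + (x₂-2)^2 - r by nlinarith [sq_nonneg (2*x₂-3)])
      (show (0:ℝ) < 2*(x₁-2)^2 + (x₂-1)^2 + (x₂-2)^2 - r by nlinarith [sq_nonneg (2*x₂-3)])]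

lemma root_exists (x₁ x₂ : ℝ) : ∃ r, (Fmat x₁ x₂).charpoly.IsRoot r := by
  set a := 2*(x₁-1)^2 + (x₂-1)^2 + (x₂-2)^2 with ha
  set c := 2*(x₁-2)^2 + (x₂-1)^2 + (x₂-2)^2 with hc
  set b := 3 - 2*x₂ with hb
  have hΔ : (0:ℝ) ≤ (a - c)^2 + 4*b^2 := by positivity
  refine ⟨(a + c + Real.sqrt ((a - c)^2 + 4*b^2)) / 2, ?_⟩
  rw [isRoot_iff]
  have hs : Real.sqrt ((a - c)^2 + 4*b^2) ^ 2 = (a - c)^2 + 4*b^2 := Real.sq_sqrt hΔ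
  nlinarith [hs]

lemma lambdaMin_ge (x₁ x₂ : ℝ) : 1/2 ≤ lambdaMin (Fmat x₁ x₂) := by
  apply le_csInf
  · obtain ⟨r, hr⟩ := root_exists x₁ x₂
    exact ⟨r, hr⟩
  · intro r hr
    exact root_ge x₁ x₂ r hr

lemma lambdaMin_special : lambdaMin (Fmat (3/2) 1) = 1/2 := by
  have hset : {r : ℝ | (Fmat (3/2) 1).charpoly.IsRoot r} = {1/2, 5/2} := by
    ext r
    simp only [Set.mem_setOf_eq, isRoot_iff, Set.mem_insert_iff, Set.mem_singleton_iff]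
    constructor
    · intro h
      have : (r - 1/2) * (r - 5/2) = 0 := by nlinarith
      rcases mul_eq_zero.mp this with h' | h' <;> [left; right] <;> linarith
    · rintro (rfl | rfl) <;> norm_num
  rw [lambdaMin, hset]
  rw [csInf_pair]
  norm_num

/-- λ_min(F(3/2,1)) = 1/2, hence inf over K = {x : x₁² ≤ 4, x₂² ≤ 4} of λ_min(F(x)) equals
1/2. -/
theorem stmt_10 :
    lambdaMin (Fmat (3/2) 1) = 1/2 ∧
      sInf ((fun x : ℝ × ℝ => lambdaMin (Fmat x.1 x.2)) ''
        {x : ℝ × ℝ | x.1 ^ 2 ≤ 4 ∧ x.2 ^ 2 ≤ 4}) = 1/2 := by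
  refine ⟨lambdaMin_special, ?_⟩
  have hmem : (1/2 : ℝ) ∈ (fun x : ℝ × ℝ => lambdaMin (Fmat x.1 x.2)) ''
      {x : ℝ × ℝ | x.1 ^ 2 ≤ 4 ∧ x.2 ^ 2 ≤ 4} := by
    refine ⟨(3/2, 1), ?_, lambdaMin_special⟩
    constructor <;> norm_num
  have hbdd : ∀ y ∈ (fun x : ℝ × ℝ => lambdaMin (Fmat x.1 x.2)) ''
      {x : ℝ × ℝ | x.1 ^ 2 ≤ 4 ∧ x.2 ^ 2 ≤ 4}, (1/2:ℝ) ≤ y := by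
    rintro y ⟨⟨x₁, x₂⟩, -, rfl⟩
    exact lambdaMin_ge x₁ x₂
  exact le_antisymm (csInf_le ⟨1/2, hbdd⟩ hmem) (le_csInf ⟨1/2, hmem⟩ hbdd)
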